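/- Let R → S be a flat homomorphism of commutative rings and M a finitely generated R-module. Then the annihilator of S ⊗_R M in S equals the ideal of S generated by the image of the annihilator of M in R. -/

import Mathlib

open TensorProduct

/-- For a flat homomorphism `R → S` of commutative rings and a finitely generated
`R`-module `M`, the annihilator of `S ⊗[R] M` in `S` is the ideal of `S` generated by
the image of the annihilator of `M`. -/
theorem stmt_3 (R S : Type) [CommRing R] [CommRing S] [Algebra R S] [Module.Flat R S]
    (M : Type) [AddCommGroup M] [Module R M] [Module.Finite R M] :
    Module.annihilator S (S ⊗[R] M) = (Module.annihilator R M).map (algebraMap R S) := by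
  classical
  obtain ⟨n, m, hm⟩ := Module.Finite.exists_fin (R := R) (M := M)
  -- the linear map r ↦ (r • m i)_i
  set ρ : R →ₗ[R] (Fin n → M) :=
    LinearMap.pi (fun i => LinearMap.toSpanSingleton R M (m i)) with hρ
  have hker : LinearMap.ker ρ = Module.annihilator R M := by
    ext r
    constructor
    · intro hr
      rw [← Submodule.annihilator_top, ← hm]
      rw [Submodule.mem_annihilator_span]
      rintro ⟨x, i, rfl⟩
      simpa [hρ] using congrFun (LinearMap.mem_ker.mp hr) i
    · intro hr
      rw [LinearMap.mem_ker]
      funext i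
      exact Module.mem_annihilator.mp hr (m i)
  apply le_antisymm
  · -- hard direction, uses flatness
    intro s hs
    -- s ⊗ m = 0 since each s ⊗ (m i) = 0
    have h1 : ∀ i, s ⊗ₜ[R] (m i) = (0 : S ⊗[R] M) := by
      intro i
      have := Module.mem_annihilator.mp hs ((1 : S) ⊗ₜ[R] m i)
      rwa [TensorProduct.smul_tmul', smul_eq_mul, mul_one] at this
    have h2 : (ρ.lTensor S) (s ⊗ₜ[R] (1 : R)) = 0 := by
      have : (ρ.lTensor S) (s ⊗ₜ[R] (1 : R)) = s ⊗ₜ[R] (fun i => m i) := by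
        rw [LinearMap.lTensor_tmul]
        congr 1
        funext i
        simp [hρ]
      rw [this]
      apply (TensorProduct.piRight R S S (fun _ : Fin n => M)).injective
      simp only [map_zero]
      ext i
      simp [h1 i]
    -- exactness by flatness
    have hexact : Function.Exact ((LinearMap.ker ρ).subtype.lTensor S) (ρ.lTensor S) :=
      Module.Flat.lTensor_exact S ρ.exact_subtype_ker_map
    have h3 : s ⊗ₜ[R] (1 : R) ∈ LinearMap.range ((LinearMap.ker ρ).subtype.lTensor S) :=
      (hexact _).mp h2
    obtain ⟨y, hy⟩ := h3
    -- push forward along S ⊗ R ≃ S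
    have key : ∀ z : S ⊗[R] (LinearMap.ker ρ),
        (TensorProduct.rid R S) (((LinearMap.ker ρ).subtype.lTensor S) z)
          ∈ (Module.annihilator R M).map (algebraMap R S) := by
      intro z
      induction z using TensorProduct.induction_on with
      | zero => simp
      | tmul t a =>
        obtain ⟨a, ha⟩ := a
        simp only [LinearMap.lTensor_tmul, Submodule.coe_subtype, TensorProduct.rid_tmul]
        rw [Algebra.smul_def]
        exact Ideal.mul_mem_right _ _
          (Ideal.mem_map_of_mem _ (hker ▸ ha))
      | add x y hx hy =>
        rw [map_add, map_add]
        exact Ideal.add_mem _ hx hy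
    have := key y
    rw [hy] at this
    simpa using this
  · -- easy direction
    rw [Ideal.map_le_iff_le_comap]
    intro a ha
    simp only [Ideal.mem_comap]
    rw [Module.mem_annihilator]
    intro x
    induction x using TensorProduct.induction_on with
    | zero => simp
    | tmul t b =>
      rw [algebraMap_smul, TensorProduct.smul_tmul', TensorProduct.smul_tmul,
        Module.mem_annihilator.mp ha b, TensorProduct.tmul_zero]
    | add x y hx hy => rw [smul_add, hx, hy, add_zero]
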